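/- Assume b = 0. If z, s : ℝ → ℝ are differentiable functions satisfying z′(t) = −d·z(t) + tanh(a·z(t)·(k·z(t)² + μ₀ − s(t))) and s′(t) = ε·(−s(t) + kₛ·z(t)⁴) for all t ∈ ℝ, and z(0) = 0, then z(t) = 0 for all t ∈ ℝ; that is, for zero input the line {z = 0} is invariant under the S-NOD dynamics. -/

import Mathlib

lemma abs_tanh_le_abs (x : ℝ) : |Real.tanh x| ≤ |x| := by
  have key : ∀ y : ℝ, 0 ≤ y → Real.tanh y ≤ y := by
    intro y hy
    have hmono : MonotoneOn (fun u : ℝ => u * Real.cosh u - Real.sinh u) (Set.Icc 0 y) := by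
      apply monotoneOn_of_deriv_nonneg (convex_Icc 0 y)
      · fun_prop
      · intro u hu
        exact (((hasDerivAt_id u).mul (Real.hasDerivAt_cosh u)).sub
          (Real.hasDerivAt_sinh u)).differentiableAt.differentiableWithinAt
      · intro u hu
        have hder : deriv (fun u : ℝ => u * Real.cosh u - Real.sinh u) u = u * Real.sinh u := by
          have := (((hasDerivAt_id u).mul (Real.hasDerivAt_cosh u)).sub
            (Real.hasDerivAt_sinh u)).deriv
          simpa [mul_comm] using this
        rw [hder]
        rw [interior_Icc, Set.mem_Ioo] at hu
        exact mul_nonneg hu.1.le (Real.sinh_nonneg_iff.2 hu.1.le)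
    have h0 : (0 : ℝ) * Real.cosh 0 - Real.sinh 0 ≤ y * Real.cosh y - Real.sinh y := by
      rcases eq_or_lt_of_le hy with h | h
      · rw [← h]
      · exact hmono (Set.left_mem_Icc.2 hy) (Set.right_mem_Icc.2 hy) hy
    simp at h0
    rw [Real.tanh_eq_sinh_div_cosh, div_le_iff₀ (Real.cosh_pos y)]
    linarith
  rcases le_total 0 x with h | h
  · rw [abs_of_nonneg h, abs_of_nonneg]
    · exact key x h
    · rw [Real.tanh_eq_sinh_div_cosh]
      exact div_nonneg (Real.sinh_nonneg_iff.2 h) (Real.cosh_pos x).le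
  · rw [abs_of_nonpos h, abs_of_nonpos]
    · have := key (-x) (by linarith)
      rw [Real.tanh_neg] at this; linarith
    · rw [Real.tanh_eq_sinh_div_cosh]
      exact div_nonpos_of_nonpos_of_nonneg (Real.sinh_nonpos_iff.2 h) (Real.cosh_pos x).le

lemma zero_of_deriv_bound (C : ℝ → ℝ) (hC : Continuous C) (g g' : ℝ → ℝ)
    (hg : ∀ t, HasDerivAt g (g' t) t) (hb : ∀ t, |g' t| ≤ C t * |g t|)
    (h0 : g 0 = 0) : ∀ t, 0 ≤ t → g t = 0 := by
  intro t ht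
  obtain ⟨K, hK⟩ : ∃ K, ∀ u ∈ Set.Icc (0:ℝ) t, C u ≤ K := by
    obtain ⟨K, hK⟩ := (isCompact_Icc (a := (0:ℝ)) (b := t)).exists_bound_of_continuousOn
      hC.continuousOn
    exact ⟨K, fun u hu => (le_abs_self _).trans (hK u hu)⟩
  have := norm_le_gronwallBound_of_norm_deriv_right_le (f := g) (f' := g') (δ := 0) (K := K)
    (ε := 0) (a := 0) (b := t)
    (fun u _ => (hg u).continuousAt.continuousWithinAt)
    (fun u _ => (hg u).hasDerivWithinAt)
    (by simp [h0])
    (fun u hu => by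
      have h1 := hb u
      have h2 : C u * |g u| ≤ K * |g u| :=
        mul_le_mul_of_nonneg_right (hK u (Set.mem_Icc_of_Ico hu)) (abs_nonneg _)
      simpa [Real.norm_eq_abs] using h1.trans h2)
  have h := this t (Set.right_mem_Icc.2 ht)
  rw [gronwallBound_ε0_δ0] at h
  simpa [Real.norm_eq_abs, abs_nonpos_iff] using h

/-- Assume zero input `b = 0`. If `z, s : ℝ → ℝ` are differentiable
functions satisfying the S-NOD equations
`z′(t) = −d·z(t) + tanh(a·z(t)·(k·z(t)² + μ₀ − s(t)))` and
`s′(t) = ε·(−s(t) + kₛ·z(t)⁴)` for all `t ∈ ℝ`, and `z(0) = 0`, then `z(t) = 0` for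
all `t ∈ ℝ`; that is, for zero input the line `{z = 0}` is invariant under the
S-NOD dynamics. -/
theorem snod_zero_line_invariant
    (a d k ks ε μ0 : ℝ)
    (ha : 0 < a) (hd : 0 < d) (hk : 0 < k) (hks : 0 < ks) (hε : 0 < ε) (hμ0 : 0 < μ0)
    (z s : ℝ → ℝ)
    (hz : ∀ t : ℝ, HasDerivAt z
      (-d * z t + Real.tanh (a * z t * (k * z t ^ 2 + μ0 - s t))) t)
    (hs : ∀ t : ℝ, HasDerivAt s (ε * (-s t + ks * z t ^ 4)) t)
    (h0 : z 0 = 0) :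
    ∀ t : ℝ, z t = 0 := by
  have hzc : Continuous z := by
    have : Differentiable ℝ z := fun t => (hz t).differentiableAt
    exact this.continuous
  have hsc : Continuous s := by
    have : Differentiable ℝ s := fun t => (hs t).differentiableAt
    exact this.continuous
  set C : ℝ → ℝ := fun t => d + a * |k * z t ^ 2 + μ0 - s t| with hCdef
  have hCc : Continuous C := by
    apply continuous_const.add
    exact continuous_const.mul ((((continuous_const.mul (hzc.pow 2)).add continuous_const).sub hsc)).abs
  set D : ℝ → ℝ := fun t => -d * z t + Real.tanh (a * z t * (k * z t ^ 2 + μ0 - s t)) with hDdef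
  have hbound : ∀ t, |D t| ≤ C t * |z t| := by
    intro t
    have h1 : |D t| ≤ d * |z t| + |Real.tanh (a * z t * (k * z t ^ 2 + μ0 - s t))| := by
      calc |D t| ≤ |(-d) * z t| + |Real.tanh (a * z t * (k * z t ^ 2 + μ0 - s t))| :=
            abs_add_le _ _
        _ = d * |z t| + |Real.tanh (a * z t * (k * z t ^ 2 + μ0 - s t))| := by
            rw [abs_mul, abs_neg, abs_of_pos hd]
    have h2 : |Real.tanh (a * z t * (k * z t ^ 2 + μ0 - s t))| ≤
        a * |k * z t ^ 2 + μ0 - s t| * |z t| := by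
      calc |Real.tanh (a * z t * (k * z t ^ 2 + μ0 - s t))| ≤
            |a * z t * (k * z t ^ 2 + μ0 - s t)| := abs_tanh_le_abs _
        _ = a * |k * z t ^ 2 + μ0 - s t| * |z t| := by
            rw [abs_mul, abs_mul, abs_of_pos ha]; ring
    calc |D t| ≤ d * |z t| + a * |k * z t ^ 2 + μ0 - s t| * |z t| := by linarith
      _ = C t * |z t| := by ring
  intro t
  rcases le_total 0 t with ht | ht
  · exact zero_of_deriv_bound C hCc z D hz hbound h0 t ht
  · have key := zero_of_deriv_bound (fun u => C (-u)) (hCc.comp continuous_neg)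
      (fun u => z (-u)) (fun u => -(D (-u)))
      (fun u => by
        have h := (hz (-u)).comp u (hasDerivAt_neg u)
        have : (fun x : ℝ => z (-x)) = z ∘ Neg.neg := rfl
        rw [this]
        exact h.congr_deriv (by simp [hDdef]))
      (fun u => by simpa using hbound (-u))
      (by simpa using h0)
    have := key (-t) (by linarith)
    simpa using this
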